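/- Antisymmetry of the form ε₋ on homology: let E be a finite set, σ₀, σ₁ permutations of E, m a perfect matching, ρ_{m,c} = (I − ς_{m,c})^{-1}, and H₁ ⊆ ℤ^E the subgroup generated by differences of perfect matchings. Then for all h₁, h₂ ∈ H₁: h₁ᵀ (ρ_{m,0} − ρ_{m,1}) h₂ = − h₂ᵀ (ρ_{m,0} − ρ_{m,1}) h₁. -/

import Mathlib

open Finset Matrix

variable {E : Type*}

/-- A perfect matching of `(E, σ₀, σ₁)`: a `{0,1}`-valued function on `E` such that every
cycle (orbit) of `σ₀` and every cycle of `σ₁` contains exactly one element with value `1`. -/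
def IsPerfectMatching (σ₀ σ₁ : Equiv.Perm E) (m : E → ℤ) : Prop :=
  (∀ e, m e = 0 ∨ m e = 1) ∧
  (∀ e, ∃! e', σ₀.SameCycle e e' ∧ m e' = 1) ∧
  (∀ e, ∃! e', σ₁.SameCycle e e' ∧ m e' = 1)

/-- The "broken" permutation matrix `ς_{m,σ}`: the matrix of the permutation `σ`
(with `(σ e, e)`-entry `1`) in which every column `e` with `m e = 1` is replaced by zero. -/
def brokenPermMatrix [DecidableEq E] (σ : Equiv.Perm E) (m : E → ℤ) : Matrix E E ℤ :=
  Matrix.of fun e' e => if e' = σ e ∧ m e = 0 then 1 else 0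

/-- The matrix `ρ_{m,σ} = (I - ς_{m,σ})⁻¹`. -/
noncomputable def rhoMatrix [Fintype E] [DecidableEq E] (σ : Equiv.Perm E) (m : E → ℤ) :
    Matrix E E ℤ :=
  (1 - brokenPermMatrix σ m)⁻¹

/-- The subgroup `H₁ ⊆ ℤ^E` generated by all differences of perfect matchings. -/
def matchingHomology (σ₀ σ₁ : Equiv.Perm E) : AddSubgroup (E → ℤ) :=
  AddSubgroup.closure
    {x | ∃ m' m'', IsPerfectMatching σ₀ σ₁ m' ∧ IsPerfectMatching σ₀ σ₁ m'' ∧ x = m' - m''}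

section Aux
variable [Fintype E] [DecidableEq E]

lemma broken_mulVec_single (σ : Equiv.Perm E) (m : E → ℤ) (e : E) :
    brokenPermMatrix σ m *ᵥ Pi.single e 1 =
      if m e = 0 then Pi.single (σ e) 1 else 0 := by
  ext e'
  rw [Matrix.mulVec_single]
  by_cases hme : m e = 0 <;> simp [brokenPermMatrix, hme, Pi.single_apply, eq_comm]

lemma broken_pow_mulVec (σ : Equiv.Perm E) (m : E → ℤ) :
    ∀ (k : ℕ) (e : E), (∃ j < k, m ((σ ^ j) e) = 1) →
      (brokenPermMatrix σ m ^ k) *ᵥ Pi.single e 1 = 0 := by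
  intro k
  induction k with
  | zero => rintro e ⟨j, hj, -⟩; omega
  | succ k ih =>
    rintro e ⟨j, hj, hje⟩
    rw [pow_succ, ← Matrix.mulVec_mulVec, broken_mulVec_single]
    by_cases hme : m e = 0
    · rw [if_pos hme]
      apply ih
      have hj0 : j ≠ 0 := by
        rintro rfl
        simp only [pow_zero, Equiv.Perm.coe_one, id_eq] at hje
        omega
      obtain ⟨j', rfl⟩ := Nat.exists_eq_succ_of_ne_zero hj0
      refine ⟨j', by omega, ?_⟩
      rw [← hje, pow_succ]
      simp [Equiv.Perm.mul_apply]
    · rw [if_neg hme, Matrix.mulVec_zero]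

lemma broken_nilpotent (σ : Equiv.Perm E) (m : E → ℤ)
    (hσ : ∀ e, ∃! e', σ.SameCycle e e' ∧ m e' = 1) :
    brokenPermMatrix σ m ^ orderOf σ = 0 := by
  ext e' e
  have h : ∃ j < orderOf σ, m ((σ ^ j) e) = 1 := by
    obtain ⟨e'', ⟨hc, hm1⟩, -⟩ := hσ e
    obtain ⟨i, hi, hieq⟩ := hc.exists_pow_eq'
    exact ⟨i, hi, by rw [hieq]; exact hm1⟩
  have := congrFun (broken_pow_mulVec σ m _ e h) e'
  simpa [Matrix.mulVec_single] using this

lemma one_sub_broken_isUnit (σ : Equiv.Perm E) (m : E → ℤ)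
    (hσ : ∀ e, ∃! e', σ.SameCycle e e' ∧ m e' = 1) :
    IsUnit (1 - brokenPermMatrix σ m) :=
  IsNilpotent.isUnit_one_sub ⟨orderOf σ, broken_nilpotent σ m hσ⟩

lemma one_sub_mul_rho (σ : Equiv.Perm E) (m : E → ℤ)
    (hσ : ∀ e, ∃! e', σ.SameCycle e e' ∧ m e' = 1) :
    (1 - brokenPermMatrix σ m) * rhoMatrix σ m = 1 :=
  Matrix.mul_nonsing_inv _
    ((Matrix.isUnit_iff_isUnit_det _).mp (one_sub_broken_isUnit σ m hσ))

lemma rho_row (σ : Equiv.Perm E) (m : E → ℤ)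
    (h01 : ∀ e, m e = 0 ∨ m e = 1)
    (hσ : ∀ e, ∃! e', σ.SameCycle e e' ∧ m e' = 1)
    (e₀ : E) (he₀ : m e₀ = 1) :
    Pi.single e₀ (1 : ℤ) ᵥ* rhoMatrix σ m =
      fun e => if σ.SameCycle e₀ e then 1 else 0 := by
  have key : (fun e => if σ.SameCycle e₀ e then (1:ℤ) else 0) ᵥ* (1 - brokenPermMatrix σ m) =
      Pi.single e₀ 1 := by
    ext e
    have expand : ((fun e => if σ.SameCycle e₀ e then (1:ℤ) else 0) ᵥ*
        (1 - brokenPermMatrix σ m)) e =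
        (if σ.SameCycle e₀ e then (1:ℤ) else 0) -
          (if m e = 0 then (if σ.SameCycle e₀ (σ e) then (1:ℤ) else 0) else 0) := by
      simp only [Matrix.vecMul, dotProduct, Matrix.sub_apply, Matrix.one_apply,
        brokenPermMatrix, Matrix.of_apply, mul_sub, Finset.sum_sub_distrib]
      congr 1
      · rw [Finset.sum_eq_single e] <;> simp +contextual [eq_comm]
      · by_cases hme : m e = 0
        · rw [Finset.sum_eq_single (σ e)] <;> simp +contextual [hme]
        · simp [hme]
    rw [expand]
    by_cases hc : σ.SameCycle e₀ e
    · have hcσ : σ.SameCycle e₀ (σ e) := Equiv.Perm.sameCycle_apply_right.2 hc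
      by_cases hme : m e = 0
      · have hne : e ≠ e₀ := by rintro rfl; rw [hme] at he₀; exact absurd he₀ (by norm_num)
        simp [hc, hcσ, hme, Pi.single_apply, hne]
      · have hme1 : m e = 1 := (h01 e).resolve_left hme
        obtain ⟨u, -, huniq⟩ := hσ e₀
        have he1 : e = u := huniq e ⟨hc, hme1⟩
        have he2 : e₀ = u := huniq e₀ ⟨Equiv.Perm.SameCycle.refl σ e₀, he₀⟩
        have heq : e = e₀ := he1.trans he2.symm
        subst heq
        simp [hc, he₀, Pi.single_apply]
    · have hcσ : ¬ σ.SameCycle e₀ (σ e) := fun h => hc (Equiv.Perm.sameCycle_apply_right.1 h)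
      have hne : e ≠ e₀ := by rintro rfl; exact hc (Equiv.Perm.SameCycle.refl σ e)
      simp [hc, hcσ, Pi.single_apply, hne]
  calc Pi.single e₀ (1 : ℤ) ᵥ* rhoMatrix σ m
      = ((fun e => if σ.SameCycle e₀ e then (1:ℤ) else 0) ᵥ* (1 - brokenPermMatrix σ m)) ᵥ*
          rhoMatrix σ m := by rw [key]
    _ = (fun e => if σ.SameCycle e₀ e then (1:ℤ) else 0) ᵥ*
          ((1 - brokenPermMatrix σ m) * rhoMatrix σ m) := by rw [Matrix.vecMul_vecMul]
    _ = _ := by rw [one_sub_mul_rho σ m hσ, Matrix.vecMul_one]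

lemma matching_cycle_sum (σ : Equiv.Perm E) (e₀ : E) (m' : E → ℤ)
    (h01 : ∀ e, m' e = 0 ∨ m' e = 1)
    (hσ : ∀ e, ∃! e', σ.SameCycle e e' ∧ m' e' = 1) :
    (fun e => if σ.SameCycle e₀ e then (1:ℤ) else 0) ⬝ᵥ m' = 1 := by
  obtain ⟨u, ⟨hcu, hmu⟩, huniq⟩ := hσ e₀
  unfold dotProduct
  rw [Finset.sum_eq_single u]
  · simp [hcu, hmu]
  · intro e _ hne
    by_cases hc : σ.SameCycle e₀ e
    · rcases h01 e with h | h
      · simp [h]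
      · exact absurd (huniq e ⟨hc, h⟩) hne
    · simp [hc]
  · simp

lemma dot_eq_zero_of_mem (σ₀ σ₁ : Equiv.Perm E) (w : E → ℤ)
    (hgen : ∀ m' m'', IsPerfectMatching σ₀ σ₁ m' → IsPerfectMatching σ₀ σ₁ m'' →
      w ⬝ᵥ (m' - m'') = 0)
    {h : E → ℤ} (hh : h ∈ matchingHomology σ₀ σ₁) : w ⬝ᵥ h = 0 := by
  induction hh using AddSubgroup.closure_induction with
  | mem x hx => obtain ⟨m', m'', hm', hm'', rfl⟩ := hx; exact hgen m' m'' hm' hm''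
  | zero => simp
  | add x y _ _ ihx ihy => rw [dotProduct_add, ihx, ihy]; ring
  | neg x _ ihx => rw [dotProduct_neg, ihx]; ring

lemma rho_mulVec_marked (σ σ₀ σ₁ : Equiv.Perm E) (m : E → ℤ)
    (h01 : ∀ e, m e = 0 ∨ m e = 1)
    (hσ : ∀ e, ∃! e', σ.SameCycle e e' ∧ m e' = 1)
    (hgood : ∀ m', IsPerfectMatching σ₀ σ₁ m' →
      (∀ e, m' e = 0 ∨ m' e = 1) ∧ ∀ e, ∃! e', σ.SameCycle e e' ∧ m' e' = 1)
    {h : E → ℤ} (hh : h ∈ matchingHomology σ₀ σ₁) (e₀ : E) (he₀ : m e₀ = 1) :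
    (rhoMatrix σ m *ᵥ h) e₀ = 0 := by
  have h1 : (rhoMatrix σ m *ᵥ h) e₀ = Pi.single e₀ (1:ℤ) ⬝ᵥ (rhoMatrix σ m *ᵥ h) := by
    rw [single_dotProduct, one_mul]
  rw [h1, Matrix.dotProduct_mulVec, rho_row σ m h01 hσ e₀ he₀]
  apply dot_eq_zero_of_mem σ₀ σ₁ _ _ hh
  intro m' m'' hm' hm''
  rw [dotProduct_sub,
    matching_cycle_sum σ e₀ m' (hgood m' hm').1 (hgood m' hm').2,
    matching_cycle_sum σ e₀ m'' (hgood m'' hm'').1 (hgood m'' hm'').2, sub_self]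

lemma broken_mulVec_apply (σ : Equiv.Perm E) (m : E → ℤ) (x : E → ℤ) (e : E) :
    (brokenPermMatrix σ m *ᵥ x) (σ e) = if m e = 0 then x e else 0 := by
  simp only [Matrix.mulVec, dotProduct, brokenPermMatrix, Matrix.of_apply]
  rw [Finset.sum_eq_single e]
  · by_cases hme : m e = 0 <;> simp [hme]
  · intro b _ hbe
    simp only [ite_mul, one_mul, zero_mul, ite_eq_right_iff, and_imp]
    intro hb
    exact absurd (σ.injective hb.symm) hbe
  · simp

lemma sym_identity (σ σ₀ σ₁ : Equiv.Perm E) (m : E → ℤ)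
    (h01 : ∀ e, m e = 0 ∨ m e = 1)
    (hσ : ∀ e, ∃! e', σ.SameCycle e e' ∧ m e' = 1)
    (hgood : ∀ m', IsPerfectMatching σ₀ σ₁ m' →
      (∀ e, m' e = 0 ∨ m' e = 1) ∧ ∀ e, ∃! e', σ.SameCycle e e' ∧ m' e' = 1)
    {h₁ h₂ : E → ℤ} (hh₁ : h₁ ∈ matchingHomology σ₀ σ₁) (hh₂ : h₂ ∈ matchingHomology σ₀ σ₁) :
    h₁ ⬝ᵥ (rhoMatrix σ m *ᵥ h₂) + h₂ ⬝ᵥ (rhoMatrix σ m *ᵥ h₁) = h₁ ⬝ᵥ h₂ := by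
  set ς := brokenPermMatrix σ m with hς
  set u := rhoMatrix σ m *ᵥ h₂ with hudef
  set v := rhoMatrix σ m *ᵥ h₁ with hvdef
  have hρ := one_sub_mul_rho σ m hσ
  have hu : (1 - ς) *ᵥ u = h₂ := by
    rw [hudef, Matrix.mulVec_mulVec, hρ, Matrix.one_mulVec]
  have hv : (1 - ς) *ᵥ v = h₁ := by
    rw [hvdef, Matrix.mulVec_mulVec, hρ, Matrix.one_mulVec]
  have huz : ∀ e, ¬ m e = 0 → u e = 0 := fun e hme =>
    rho_mulVec_marked σ σ₀ σ₁ m h01 hσ hgood hh₂ e ((h01 e).resolve_left hme)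
  have key : (ς *ᵥ v) ⬝ᵥ (ς *ᵥ u) = v ⬝ᵥ u := by
    unfold dotProduct
    rw [← Equiv.sum_comp σ (fun e' => (ς *ᵥ v) e' * (ς *ᵥ u) e')]
    apply Finset.sum_congr rfl
    intro e _
    rw [hς, broken_mulVec_apply, broken_mulVec_apply]
    by_cases hme : m e = 0
    · simp [hme]
    · simp [hme, huz e hme]
  have c2 : (ς *ᵥ u) ⬝ᵥ v = v ⬝ᵥ (ς *ᵥ u) := dotProduct_comm _ _
  have c3 : u ⬝ᵥ v = v ⬝ᵥ u := dotProduct_comm _ _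
  rw [← hu, ← hv]
  simp only [Matrix.sub_mulVec, Matrix.one_mulVec, sub_dotProduct,
    dotProduct_sub]
  linarith

end Aux

/-- Antisymmetry of the form `ε₋` given by `ρ_{m,0} - ρ_{m,1}` on the subgroup `H₁`
generated by differences of perfect matchings. -/
theorem epsMinus_antisymm [Fintype E] [DecidableEq E]
    (σ₀ σ₁ : Equiv.Perm E) (m : E → ℤ) (hm : IsPerfectMatching σ₀ σ₁ m)
    (h₁ h₂ : E → ℤ)
    (hh₁ : h₁ ∈ matchingHomology σ₀ σ₁) (hh₂ : h₂ ∈ matchingHomology σ₀ σ₁) :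
    h₁ ⬝ᵥ (rhoMatrix σ₀ m - rhoMatrix σ₁ m).mulVec h₂ =
      -(h₂ ⬝ᵥ (rhoMatrix σ₀ m - rhoMatrix σ₁ m).mulVec h₁) := by
  obtain ⟨h01, hσ0, hσ1⟩ := hm
  have S0 := sym_identity σ₀ σ₀ σ₁ m h01 hσ0
    (fun m' hm' => ⟨hm'.1, hm'.2.1⟩) hh₁ hh₂
  have S1 := sym_identity σ₁ σ₀ σ₁ m h01 hσ1
    (fun m' hm' => ⟨hm'.1, hm'.2.2⟩) hh₁ hh₂
  simp only [Matrix.sub_mulVec, dotProduct_sub]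
  linarith
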